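/- The set H_n = B_n \ α(C_n) generates B_n: every element of B_n is a composition t_0 ∘ s^k where t_0 ∈ H_n, k ≥ 0, and s is the transformation with s(i) = i+1 for i < n and s(n) = n. Moreover |H_n| = ⌊e·(n-1)!⌋ - ⌊e·(n-2)!⌋ for n ≥ 3. -/

import Mathlib

/-- `B n k` (for `1 ≤ k ≤ n`) : transformations `t` of `{1,…,n}` (encoded as
`Fin n`, 0-indexed; the 1-indexed value of `t i` is `(t i : ℕ) + 1`) with
`t(i) > i` for all `i < k` and `t(i) = k` for all `i ≥ k`. -/
def B (n k : ℕ) : Set (Fin n → Fin n) :=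
  {t | (∀ i : Fin n, (i : ℕ) + 1 < k → (i : ℕ) < (t i : ℕ)) ∧
       (∀ i : Fin n, k ≤ (i : ℕ) + 1 → (t i : ℕ) + 1 = k)}

/-- `Bu n = ⋃_{k=1}^{n} B n k`. -/
def Bu (n : ℕ) : Set (Fin n → Fin n) :=
  {t | ∃ k, 1 ≤ k ∧ k ≤ n ∧ t ∈ B n k}

/-- `C n` : transformations of `Bu n` all of whose (1-indexed) values are `< n`. -/
def C (n : ℕ) : Set (Fin n → Fin n) :=
  {t | t ∈ Bu n ∧ ∀ j : Fin n, (t j : ℕ) + 1 < n}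

/-- `α(C n)` : the image of `C n` under the shift `α` of all values up by one. -/
def alphaC (n : ℕ) : Set (Fin n → Fin n) :=
  {t | ∃ t0 ∈ C n, ∀ j : Fin n, (t j : ℕ) = (t0 j : ℕ) + 1}

/-- `H n = Bu n \ α(C n)`. -/
def H (n : ℕ) : Set (Fin n → Fin n) := Bu n \ alphaC n


namespace Stmt18Aux

open Finset



/-- partial sum of e·m! -/
def S (m : ℕ) : ℕ := ∑ j ∈ Finset.range (m + 1), m.descFactorial j

lemma hasSum_exp_fact (m : ℕ) :
    HasSum (fun k : ℕ => (m.factorial : ℝ) / (k.factorial : ℝ)) (Real.exp 1 * m.factorial) := by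
  have h : HasSum (fun k : ℕ => (1 : ℝ) ^ k / k.factorial) (Real.exp 1) := by
    rw [Real.exp_eq_exp_ℝ]
    exact NormedSpace.expSeries_div_hasSum_exp (1 : ℝ)
  have := h.mul_left (m.factorial : ℝ)
  simpa [mul_comm, mul_div_assoc, div_eq_mul_inv] using this

lemma S_cast (m : ℕ) :
    (S m : ℝ) = ∑ k ∈ Finset.range (m + 1), (m.factorial : ℝ) / k.factorial := by
  rw [S, Nat.cast_sum]
  rw [← Finset.sum_range_reflect (fun k => (m.factorial : ℝ) / (k.factorial : ℝ)) (m+1)]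
  refine Finset.sum_congr rfl fun j hj => ?_
  have hj' : j ≤ m := by simpa using Nat.lt_succ_iff.mp (Finset.mem_range.mp hj)
  have key : (m - j).factorial * m.descFactorial j = m.factorial :=
    Nat.factorial_mul_descFactorial hj'
  have : m + 1 - 1 - j = m - j := by omega
  rw [this]
  field_simp
  rw [← key]
  push_cast
  ring

lemma tail_bound (m : ℕ) (hm : 1 ≤ m) :
    ∃ T : ℝ, 0 < T ∧ T < 1 ∧ Real.exp 1 * m.factorial = S m + T := by
  have h := hasSum_exp_fact m
  have htail : HasSum (fun j => (m.factorial : ℝ) / (j + (m+1)).factorial)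
      (Real.exp 1 * m.factorial - ∑ k ∈ Finset.range (m+1), (m.factorial : ℝ) / k.factorial) :=
    (hasSum_nat_add_iff' (m+1)).mpr h
  set T := Real.exp 1 * m.factorial - ∑ k ∈ Finset.range (m+1), (m.factorial : ℝ) / k.factorial
  refine ⟨T, ?_, ?_, by rw [S_cast]; ring⟩
  · have h0 : (0:ℝ) < (m.factorial : ℝ) / (0 + (m+1)).factorial := by positivity
    calc (0:ℝ) < (m.factorial : ℝ) / (0 + (m+1)).factorial := h0
    _ ≤ T := le_hasSum htail 0 (fun j _ => by positivity)
  · -- compare with geometric series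
    have hr : |(1 : ℝ) / (m + 2)| < 1 := by
      rw [abs_of_pos (by positivity)]
      rw [div_lt_one (by positivity)]
      linarith [Nat.cast_nonneg (α := ℝ) m]
    have hgeom : HasSum (fun j : ℕ => ((1:ℝ) / ((m:ℝ)+1)) * ((1:ℝ) / ((m:ℝ)+2)) ^ j)
        (((1:ℝ) / ((m:ℝ)+1)) * (1 - (1:ℝ)/((m:ℝ)+2))⁻¹) :=
      (hasSum_geometric_of_lt_one (by positivity) (by
        rw [div_lt_one (by positivity)]; linarith [Nat.cast_nonneg (α := ℝ) m])).mul_left _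
    have hle : T ≤ ((1:ℝ) / ((m:ℝ)+1)) * (1 - (1:ℝ)/((m:ℝ)+2))⁻¹ := by
      refine hasSum_le (fun j => ?_) htail hgeom
      have key : (m+1).factorial * (m+2) ^ j ≤ (j + (m+1)).factorial := by
        induction j with
        | zero => simp
        | succ i ih =>
          calc (m+1).factorial * (m+2)^(i+1) = (m+1).factorial * (m+2)^i * (m+2) := by ring
          _ ≤ (i + (m+1)).factorial * (m+2) := Nat.mul_le_mul_right _ ih
          _ ≤ (i + (m+1)).factorial * (i + (m+1) + 1) := by
              exact Nat.mul_le_mul_left _ (by omega)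
          _ = (i + 1 + (m+1)).factorial := by
              rw [show i + 1 + (m+1) = (i + (m+1)) + 1 by omega, Nat.factorial_succ]; ring
      have h1 : (0:ℝ) < ((j + (m+1)).factorial : ℝ) := by positivity
      rw [div_le_iff₀ h1]
      have hkey : ((m+1).factorial : ℝ) * (m+2) ^ j ≤ ((j + (m+1)).factorial : ℝ) := by
        exact_mod_cast key
      have hfact : (m.factorial : ℝ) * ((m:ℝ)+1) = ((m+1).factorial : ℝ) := by
        push_cast [Nat.factorial_succ]; ring
      calc (m.factorial : ℝ)
          = (1/((m:ℝ)+1) * (1/((m:ℝ)+2))^j) * (((m+1).factorial : ℝ) * ((m:ℝ)+2)^j) := by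
            rw [← hfact]; field_simp; ring_nf; rw [← mul_pow, inv_mul_cancel₀ (by positivity), one_pow]
        _ ≤ (1/((m:ℝ)+1) * (1/((m:ℝ)+2))^j) * ((j + (m+1)).factorial : ℝ) := by
            refine mul_le_mul_of_nonneg_left ?_ (by positivity)
            exact_mod_cast hkey
    refine lt_of_le_of_lt hle ?_
    have h2 : (1 - 1/((m:ℝ)+2))⁻¹ = ((m:ℝ)+2)/((m:ℝ)+1) := by
      rw [one_sub_div (by positivity)]
      rw [inv_div]
      ring_nf
    rw [h2]
    rw [div_mul_div_comm, one_mul, div_lt_one (by positivity)]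
    have : (1:ℝ) ≤ m := by exact_mod_cast hm
    nlinarith

lemma floor_exp_fact (m : ℕ) (hm : 1 ≤ m) :
    ⌊Real.exp 1 * (m.factorial : ℝ)⌋₊ = S m := by
  obtain ⟨T, hT0, hT1, hEq⟩ := tail_bound m hm
  rw [hEq]
  rw [Nat.floor_eq_iff (by positivity)]
  refine ⟨by linarith, ?_⟩
  push_cast
  linarith


variable {n : ℕ}

/-- the Finset version of `B n k`. -/
def BF (n k : ℕ) : Finset (Fin n → Fin n) :=
  Fintype.piFinset fun i =>
    if (i : ℕ) + 1 < k then Finset.Ioi i else Finset.univ.filter fun x => (x : ℕ) + 1 = k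

lemma mem_BF {k : ℕ} (t : Fin n → Fin n) : t ∈ BF n k ↔ t ∈ B n k := by
  rw [BF, Fintype.mem_piFinset]
  constructor
  · intro h
    constructor
    · intro i hi
      have := h i
      rw [if_pos hi] at this
      exact Fin.lt_def.mp (Finset.mem_Ioi.mp this)
    · intro i hi
      have := h i
      rw [if_neg (by omega)] at this
      simpa using this
  · intro ⟨h1, h2⟩ i
    by_cases hi : (i : ℕ) + 1 < k
    · rw [if_pos hi]; exact Finset.mem_Ioi.mpr (h1 i hi)
    · rw [if_neg hi]; simp [h2 i (by omega)]

lemma card_BF {k : ℕ} (hk1 : 1 ≤ k) (hkn : k ≤ n) :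
    (BF n k).card = (n - 1).descFactorial (k - 1) := by
  rw [BF, Fintype.card_piFinset]
  have hcard : ∀ i : Fin n,
      ((if (i : ℕ) + 1 < k then Finset.Ioi i
        else Finset.univ.filter fun x : Fin n => (x : ℕ) + 1 = k).card)
      = if (i : ℕ) + 1 < k then n - 1 - (i : ℕ) else 1 := by
    intro i
    by_cases hi : (i : ℕ) + 1 < k
    · rw [if_pos hi, if_pos hi, Fin.card_Ioi]
    · rw [if_neg hi, if_neg hi]
      have : (Finset.univ.filter fun x : Fin n => (x : ℕ) + 1 = k)
          = {(⟨k - 1, by omega⟩ : Fin n)} := by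
        ext x; simp [Fin.ext_iff]; omega
      rw [this, Finset.card_singleton]
  simp_rw [hcard]
  rw [Fin.prod_univ_eq_prod_range (fun i => if i + 1 < k then n - 1 - i else 1) n]
  rw [Nat.descFactorial_eq_prod_range]
  rw [← Finset.prod_subset (Finset.range_subset_range.mpr (show k - 1 ≤ n by omega))
    (f := fun i => if i + 1 < k then n - 1 - i else 1)
    (fun x _ hx => by simp only [Finset.mem_range, not_lt] at hx; exact if_neg (by omega))]
  refine Finset.prod_congr rfl fun i hi => ?_
  rw [Finset.mem_range] at hi
  exact if_pos (by omega)

def BuF (n : ℕ) : Finset (Fin n → Fin n) := (Finset.range n).biUnion fun j => BF n (j + 1)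

lemma k_eq_of_mem_B (hn : 1 ≤ n) {k : ℕ} (hk : k ≤ n) {t : Fin n → Fin n}
    (ht : t ∈ B n k) : k = (t ⟨n - 1, by omega⟩ : ℕ) + 1 :=
  (ht.2 ⟨n - 1, by omega⟩ (by simp; omega)).symm

lemma mem_BuF (t : Fin n → Fin n) : t ∈ BuF n ↔ t ∈ Bu n := by
  rw [BuF, Finset.mem_biUnion]
  constructor
  · rintro ⟨j, hj, ht⟩
    rw [Finset.mem_range] at hj
    exact ⟨j + 1, by omega, by omega, (mem_BF t).mp ht⟩
  · rintro ⟨k, hk1, hkn, ht⟩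
    exact ⟨k - 1, Finset.mem_range.mpr (by omega),
      (mem_BF t).mpr (by rwa [Nat.sub_add_cancel hk1])⟩

lemma card_BuF (hn : 1 ≤ n) : (BuF n).card = S (n - 1) := by
  rw [BuF, Finset.card_biUnion, S]
  · rw [show n - 1 + 1 = n by omega]
    exact Finset.sum_congr rfl fun j hj => by
      rw [card_BF (by omega) (by simp at hj; omega), Nat.add_sub_cancel]
  · intro j1 h1 j2 h2 hne
    simp only [Finset.mem_coe, Finset.mem_range] at h1 h2
    rw [Function.onFun, Finset.disjoint_left]
    intro t ht1 ht2
    have e1 := k_eq_of_mem_B hn (by omega) ((mem_BF t).mp ht1)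
    have e2 := k_eq_of_mem_B hn (by omega) ((mem_BF t).mp ht2)
    omega

def CF (n k : ℕ) : Finset (Fin n → Fin n) :=
  Fintype.piFinset fun i =>
    (if (i : ℕ) + 1 < k then Finset.Ioi i
      else Finset.univ.filter fun x => (x : ℕ) + 1 = k).filter fun x => (x : ℕ) + 1 < n

lemma mem_CF {k : ℕ} (t : Fin n → Fin n) :
    t ∈ CF n k ↔ t ∈ B n k ∧ ∀ j : Fin n, (t j : ℕ) + 1 < n := by
  rw [CF, Fintype.mem_piFinset]
  simp only [Finset.mem_filter]
  constructor
  · intro h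
    refine ⟨(mem_BF t).mp (by rw [BF, Fintype.mem_piFinset]; exact fun i => (h i).1),
      fun j => (h j).2⟩
  · intro ⟨hB, hlt⟩ i
    rw [← mem_BF, BF, Fintype.mem_piFinset] at hB
    exact ⟨hB i, hlt i⟩

lemma card_CF {k : ℕ} (hk1 : 1 ≤ k) (hkn : k ≤ n - 1) (hn : 2 ≤ n) :
    (CF n k).card = (n - 2).descFactorial (k - 1) := by
  rw [CF, Fintype.card_piFinset]
  have hcard : ∀ i : Fin n,
      (((if (i : ℕ) + 1 < k then Finset.Ioi i
        else Finset.univ.filter fun x : Fin n => (x : ℕ) + 1 = k).filter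
          fun x : Fin n => (x : ℕ) + 1 < n).card)
      = if (i : ℕ) + 1 < k then n - 2 - (i : ℕ) else 1 := by
    intro i
    by_cases hi : (i : ℕ) + 1 < k
    · rw [if_pos hi, if_pos hi]
      have : (Finset.Ioi i).filter (fun x : Fin n => (x : ℕ) + 1 < n)
          = Finset.Ioo i ⟨n - 1, by omega⟩ := by
        ext x
        simp only [Finset.mem_filter, Finset.mem_Ioi, Finset.mem_Ioo, Fin.lt_def]
        omega
      rw [this, ← Finset.card_map Fin.valEmbedding, Fin.map_valEmbedding_Ioo, Nat.card_Ioo]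
      simp only [Fin.val_mk]
      omega
    · rw [if_neg hi, if_neg hi]
      have : ((Finset.univ.filter fun x : Fin n => (x : ℕ) + 1 = k).filter
          fun x : Fin n => (x : ℕ) + 1 < n) = {(⟨k - 1, by omega⟩ : Fin n)} := by
        ext x; simp [Fin.ext_iff]; omega
      rw [this, Finset.card_singleton]
  simp_rw [hcard]
  rw [Fin.prod_univ_eq_prod_range (fun i => if i + 1 < k then n - 2 - i else 1) n]
  rw [Nat.descFactorial_eq_prod_range]
  rw [← Finset.prod_subset (Finset.range_subset_range.mpr (show k - 1 ≤ n by omega))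
    (f := fun i => if i + 1 < k then n - 2 - i else 1)
    (fun x _ hx => by simp only [Finset.mem_range, not_lt] at hx; exact if_neg (by omega))]
  refine Finset.prod_congr rfl fun i hi => ?_
  rw [Finset.mem_range] at hi
  exact if_pos (by omega)

def CuF (n : ℕ) : Finset (Fin n → Fin n) := (Finset.range (n - 1)).biUnion fun j => CF n (j + 1)

lemma mem_CuF (hn : 2 ≤ n) (t : Fin n → Fin n) : t ∈ CuF n ↔ t ∈ C n := by
  rw [CuF, Finset.mem_biUnion]
  constructor
  · rintro ⟨j, hj, ht⟩
    rw [Finset.mem_range] at hj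
    obtain ⟨hB, hlt⟩ := (mem_CF t).mp ht
    exact ⟨⟨j + 1, by omega, by omega, hB⟩, hlt⟩
  · rintro ⟨⟨k, hk1, hkn, hB⟩, hlt⟩
    have hk' : k ≤ n - 1 := by
      have := k_eq_of_mem_B (by omega) hkn hB
      have := hlt ⟨n - 1, by omega⟩
      omega
    exact ⟨k - 1, Finset.mem_range.mpr (by omega),
      (mem_CF t).mpr ⟨by rwa [Nat.sub_add_cancel hk1], hlt⟩⟩

lemma card_CuF (hn : 2 ≤ n) : (CuF n).card = S (n - 2) := by
  rw [CuF, Finset.card_biUnion, S]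
  · rw [show n - 2 + 1 = n - 1 by omega]
    exact Finset.sum_congr rfl fun j hj => by
      rw [card_CF (by omega) (by simp at hj; omega) hn, Nat.add_sub_cancel]
  · intro j1 h1 j2 h2 hne
    simp only [Finset.mem_coe, Finset.mem_range] at h1 h2
    rw [Function.onFun, Finset.disjoint_left]
    intro t ht1 ht2
    have e1 := k_eq_of_mem_B (by omega) (by omega) ((mem_CF t).mp ht1).1
    have e2 := k_eq_of_mem_B (by omega) (by omega) ((mem_CF t).mp ht2).1
    omega


def alphaC' (n : ℕ) (Cs : Set (Fin n → Fin n)) : Set (Fin n → Fin n) :=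
  {t | ∃ t0 ∈ Cs, ∀ j : Fin n, (t j : ℕ) = (t0 j : ℕ) + 1}

section
variable {n : ℕ}

def phi (t : Fin n → Fin n) : Fin n → Fin n :=
  fun j => if h : (t j : ℕ) + 1 < n then ⟨(t j : ℕ) + 1, h⟩ else t j

lemma alphaC_eq_image (Cs : Set (Fin n → Fin n))
    (hC : ∀ t ∈ Cs, ∀ j : Fin n, (t j : ℕ) + 1 < n) :
    alphaC' n Cs = phi '' Cs := by
  ext t
  constructor
  · rintro ⟨t0, ht0, hval⟩
    refine ⟨t0, ht0, funext fun j => Fin.ext ?_⟩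
    rw [phi, dif_pos (hC t0 ht0 j)]
    exact (hval j).symm
  · rintro ⟨t0, ht0, rfl⟩
    refine ⟨t0, ht0, fun j => ?_⟩
    rw [phi, dif_pos (hC t0 ht0 j)]

lemma phi_injOn (Cs : Set (Fin n → Fin n))
    (hC : ∀ t ∈ Cs, ∀ j : Fin n, (t j : ℕ) + 1 < n) :
    Set.InjOn phi Cs := by
  intro t0 h0 t1 h1 heq
  funext j
  have e0 : (phi t0 j : ℕ) = (t0 j : ℕ) + 1 := by rw [phi, dif_pos (hC t0 h0 j)]
  have e1 : (phi t1 j : ℕ) = (t1 j : ℕ) + 1 := by rw [phi, dif_pos (hC t1 h1 j)]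
  have : phi t0 j = phi t1 j := congrFun heq j
  have := congrArg Fin.val this
  exact Fin.ext (by omega)

end

end Stmt18Aux


/-- `H n` generates `Bu n`: every element of `Bu n` equals `t₀ ∘ s^k` with
`t₀ ∈ H n`, `k ≥ 0`, and `s` the shift (`s(i) = i+1` for `i < n`, `s(n) = n`;
`x (t₀ ∘ s^k) = s^k (t₀ x)`). Moreover, for `n ≥ 3`,
`|H n| = ⌊e·(n-1)!⌋ - ⌊e·(n-2)!⌋`. -/

theorem stmt18 (n : ℕ) (hn : 3 ≤ n) (s : Fin n → Fin n)
    (hs : ∀ i : Fin n, ((i : ℕ) + 1 < n → (s i : ℕ) = (i : ℕ) + 1) ∧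
          ((i : ℕ) + 1 = n → s i = i)) :
    (∀ t ∈ Bu n, ∃ t0 ∈ H n, ∃ k : ℕ, t = fun x => s^[k] (t0 x)) ∧
    (H n).ncard = ⌊Real.exp 1 * (Nat.factorial (n - 1) : ℝ)⌋₊ -
        ⌊Real.exp 1 * (Nat.factorial (n - 2) : ℝ)⌋₊ := by
  open Stmt18Aux in
  have hCprop : ∀ t ∈ C n, ∀ j : Fin n, (t j : ℕ) + 1 < n := fun t ht j => ht.2 j
  have hαeq : alphaC n = phi '' C n := alphaC_eq_image (C n) hCprop
  constructor
  · -- generation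
    have gen : ∀ m : ℕ, ∀ t ∈ Bu n, (t ⟨n - 1, by omega⟩ : ℕ) ≤ m →
        ∃ t0 ∈ H n, ∃ k : ℕ, t = fun x => s^[k] (t0 x) := by
      intro m
      induction m with
      | zero =>
        intro t ht hle
        by_cases hα : t ∈ alphaC n
        · obtain ⟨t0, ht0, hval⟩ := hα
          have := hval ⟨n - 1, by omega⟩
          omega
        · exact ⟨t, ⟨ht, hα⟩, 0, funext fun x => by simp⟩
      | succ m ih =>
        intro t ht hle
        by_cases hα : t ∈ alphaC n
        · obtain ⟨t0, ht0, hval⟩ := hα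
          obtain ⟨u, hu, k, hk⟩ := ih t0 ht0.1
            (by have := hval ⟨n - 1, by omega⟩; omega)
          refine ⟨u, hu, k + 1, funext fun x => Fin.ext ?_⟩
          have h1 : (t x : ℕ) = (t0 x : ℕ) + 1 := hval x
          have h2 : (s (t0 x) : ℕ) = (t0 x : ℕ) + 1 := (hs (t0 x)).1 (ht0.2 x)
          have h3 : t0 x = s^[k] (u x) := congrFun hk x
          rw [Function.iterate_succ_apply', ← h3]
          omega
        · exact ⟨t, ⟨ht, hα⟩, 0, funext fun x => by simp⟩
    intro t ht
    exact gen (t ⟨n - 1, by omega⟩ : ℕ) t ht le_rfl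
  · -- cardinality
    have hBu : (Bu n).ncard = S (n - 1) := by
      rw [show Bu n = ↑(BuF n) from Set.ext fun t => (mem_BuF t).symm,
        Set.ncard_coe_finset, card_BuF (by omega)]
    have hCc : (C n).ncard = S (n - 2) := by
      rw [show C n = ↑(CuF n) from Set.ext fun t => (mem_CuF (by omega) t).symm,
        Set.ncard_coe_finset, card_CuF (by omega)]
    have hα : (alphaC n).ncard = S (n - 2) := by
      rw [hαeq, Set.ncard_image_of_injOn (phi_injOn (C n) hCprop), hCc]
    have hsub : alphaC n ⊆ Bu n := by
      rintro t ⟨t0, ht0, hval⟩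
      obtain ⟨⟨k, hk1, hkn, hB⟩, hlt⟩ := ht0
      have hk' : k ≤ n - 1 := by
        have := k_eq_of_mem_B (show 1 ≤ n by omega) hkn hB
        have := hlt ⟨n - 1, by omega⟩
        omega
      refine ⟨k + 1, by omega, by omega, ?_, ?_⟩
      · intro i hi
        have := hval i
        by_cases h : (i : ℕ) + 1 < k
        · have := hB.1 i h; omega
        · have := hB.2 i (by omega); omega
      · intro i hi
        have := hval i
        have := hB.2 i (by omega)
        omega
    rw [H, Set.ncard_diff hsub (Set.toFinite _), hBu, hα,
      floor_exp_fact (n - 1) (by omega), floor_exp_fact (n - 2) (by omega)]
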